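/- Let V₁, …, V_L be matrices with V_ℓ ∈ ℝ^{p×r_ℓ} having orthonormal columns, and set Ṽ = [V₁ V₂ ⋯ V_L] ∈ ℝ^{p×r̃} with r̃ = Σ_ℓ r_ℓ. Suppose there is η_V > 0 such that for every ℓ, (1/(L−1)) Σ_{ℓ'≠ℓ} (1 − ‖V_ℓ^T V_{ℓ'}‖₂) ≥ η_V. Then every eigenvalue of I_{r̃} − (1/L) Ṽ^T Ṽ is at least η_V (L−1)/L. -/

import Mathlib

open Matrix

noncomputable def opNorm {m n : Type*} [Fintype m] [Fintype n] [DecidableEq n]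
    (M : Matrix m n ℝ) : ℝ :=
  ‖LinearMap.toContinuousLinearMap (Matrix.toEuclideanLin M)‖

def frobSq {m n : Type*} [Fintype m] [Fintype n] (M : Matrix m n ℝ) : ℝ :=
  ∑ i, ∑ j, (M i j) ^ 2

lemma opNorm_nonneg' {m n : Type*} [Fintype m] [Fintype n] [DecidableEq n]
    (M : Matrix m n ℝ) : 0 ≤ opNorm M := norm_nonneg _

lemma norm_mulVec_le {m n : Type*} [Fintype m] [Fintype n] [DecidableEq n]
    (M : Matrix m n ℝ) (x : n → ℝ) :
    ‖(WithLp.equiv 2 (m → ℝ)).symm (M.mulVec x)‖ ≤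
      opNorm M * ‖(WithLp.equiv 2 (n → ℝ)).symm x‖ := by
  have h1 : (WithLp.equiv 2 (m → ℝ)).symm (M.mulVec x) =
      Matrix.toEuclideanLin M ((WithLp.equiv 2 (n → ℝ)).symm x) := by
    rfl
  rw [h1]
  exact (LinearMap.toContinuousLinearMap (Matrix.toEuclideanLin M)).le_opNorm _

/-- If the orthonormal-column matrices V_ℓ have pairwise heterogeneity at least η_V, then
every eigenvalue of I − (1/L) Ṽᵀ Ṽ, where Ṽ = [V₁ ⋯ V_L], is at least η_V (L−1)/L. -/
theorem eigenvalue_lb_concatenated_gram {p L : ℕ} (hL : 2 ≤ L) (r : Fin L → ℕ)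
    (V : ∀ ℓ : Fin L, Matrix (Fin p) (Fin (r ℓ)) ℝ)
    (hV : ∀ ℓ, (V ℓ)ᵀ * V ℓ = 1)
    (ηV : ℝ) (hη : 0 < ηV)
    (hhet : ∀ ℓ, ηV ≤ (1 / ((L : ℝ) - 1)) *
      ∑ ℓ' ∈ Finset.univ.erase ℓ, (1 - opNorm ((V ℓ)ᵀ * V ℓ'))) :
    ∀ μ ∈ spectrum ℝ
      ((1 : Matrix (Σ ℓ : Fin L, Fin (r ℓ)) (Σ ℓ : Fin L, Fin (r ℓ)) ℝ)
        - ((L : ℝ)⁻¹) •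
          ((Matrix.of fun i (q : Σ ℓ : Fin L, Fin (r ℓ)) => V q.1 i q.2)ᵀ
            * Matrix.of fun i (q : Σ ℓ : Fin L, Fin (r ℓ)) => V q.1 i q.2)),
      ηV * ((L : ℝ) - 1) / L ≤ μ := by
  intro μ hμ
  haveI : NeZero L := ⟨by omega⟩
  set G : Matrix (Σ ℓ : Fin L, Fin (r ℓ)) (Σ ℓ : Fin L, Fin (r ℓ)) ℝ :=
    ((Matrix.of fun i (q : Σ ℓ : Fin L, Fin (r ℓ)) => V q.1 i q.2)ᵀ
            * Matrix.of fun i (q : Σ ℓ : Fin L, Fin (r ℓ)) => V q.1 i q.2) with hG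
  set M := (1 : Matrix (Σ ℓ : Fin L, Fin (r ℓ)) (Σ ℓ : Fin L, Fin (r ℓ)) ℝ)
        - ((L : ℝ)⁻¹) • G with hM
  -- extract eigenvector
  rw [spectrum.mem_iff] at hμ
  rw [Matrix.isUnit_iff_isUnit_det, isUnit_iff_ne_zero, not_not] at hμ
  obtain ⟨v, hv0, hvec⟩ := (Matrix.exists_mulVec_eq_zero_iff).2 hμ
  have hLpos : (0:ℝ) < L := by positivity
  -- main vector equation: v - L⁻¹ • G.mulVec v = μ • v
  have heq : v - (L:ℝ)⁻¹ • G.mulVec v = μ • v := by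
    have : ((algebraMap ℝ _ μ) - M).mulVec v = 0 := hvec
    rw [Algebra.algebraMap_eq_smul_one] at this
    rw [Matrix.sub_mulVec, Matrix.smul_mulVec, Matrix.one_mulVec, hM,
      Matrix.sub_mulVec, Matrix.one_mulVec, Matrix.smul_mulVec, sub_eq_zero] at this
    exact this.symm
  classical
  -- block vectors
  set vb : ∀ ℓ : Fin L, Fin (r ℓ) → ℝ := fun ℓ i => v ⟨ℓ, i⟩ with hvb
  have hblock : ∀ (ℓ : Fin L) (i : Fin (r ℓ)), G.mulVec v ⟨ℓ, i⟩ =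
      ∑ ℓ', (((V ℓ)ᵀ * V ℓ').mulVec (vb ℓ')) i := by
    intro ℓ i
    simp only [Matrix.mulVec, dotProduct, hG, Matrix.mul_apply, Matrix.transpose_apply,
      Matrix.of_apply]
    rw [← Finset.univ_sigma_univ, Finset.sum_sigma]
  -- per-block equation
  set w : ∀ ℓ : Fin L, Fin (r ℓ) → ℝ :=
    fun ℓ => ∑ ℓ' ∈ Finset.univ.erase ℓ, (((V ℓ)ᵀ * V ℓ').mulVec (vb ℓ')) with hw
  have hper : ∀ ℓ : Fin L, (1 - μ - (L:ℝ)⁻¹) • vb ℓ = (L:ℝ)⁻¹ • w ℓ := by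
    intro ℓ
    funext i
    have h1 := congrFun heq ⟨ℓ, i⟩
    simp only [Pi.sub_apply, Pi.smul_apply, smul_eq_mul] at h1
    rw [hblock ℓ i] at h1
    have hdiag : (((V ℓ)ᵀ * V ℓ).mulVec (vb ℓ)) i = vb ℓ i := by
      rw [hV ℓ, Matrix.one_mulVec]
    rw [← Finset.add_sum_erase _ _ (Finset.mem_univ ℓ), hdiag] at h1
    have hwℓ : w ℓ i = ∑ ℓ' ∈ Finset.univ.erase ℓ, (((V ℓ)ᵀ * V ℓ').mulVec (vb ℓ')) i := by
      rw [hw]; simp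
    simp only [Pi.smul_apply, smul_eq_mul, hwℓ]
    ring_nf
    ring_nf at h1
    linarith
  -- norms
  set N : Fin L → ℝ := fun ℓ => ‖(WithLp.equiv 2 (Fin (r ℓ) → ℝ)).symm (vb ℓ)‖ with hNdef
  have hN : ∀ ℓ, |1 - μ - (L:ℝ)⁻¹| * N ℓ =
      (L:ℝ)⁻¹ * ‖(WithLp.equiv 2 (Fin (r ℓ) → ℝ)).symm (w ℓ)‖ := by
    intro ℓ
    have h2 := congrArg (fun x => ‖(WithLp.equiv 2 (Fin (r ℓ) → ℝ)).symm x‖) (hper ℓ)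
    simp only [WithLp.equiv_symm_apply, WithLp.toLp_smul, norm_smul, Real.norm_eq_abs] at h2 ⊢
    rw [hNdef]
    simp only [WithLp.equiv_symm_apply]
    rw [h2, abs_of_nonneg (by positivity : (0:ℝ) ≤ (L:ℝ)⁻¹)]
  have hwle : ∀ ℓ : Fin L, ‖(WithLp.equiv 2 (Fin (r ℓ) → ℝ)).symm (w ℓ)‖ ≤
      ∑ ℓ' ∈ Finset.univ.erase ℓ, opNorm ((V ℓ)ᵀ * V ℓ') * N ℓ' := by
    intro ℓ
    have hsum : (WithLp.equiv 2 (Fin (r ℓ) → ℝ)).symm (w ℓ) =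
        ∑ ℓ' ∈ Finset.univ.erase ℓ,
          (WithLp.equiv 2 (Fin (r ℓ) → ℝ)).symm ((((V ℓ)ᵀ * V ℓ').mulVec (vb ℓ'))) := by
        simp only [hw, WithLp.equiv_symm_apply, WithLp.toLp_sum]
    rw [hsum]
    refine (norm_sum_le _ _).trans (Finset.sum_le_sum fun ℓ' _ => ?_)
    exact norm_mulVec_le _ _
  -- pick maximizing block
  obtain ⟨ℓ₀, -, hmax⟩ := Finset.exists_max_image Finset.univ N ⟨⟨0, by omega⟩, Finset.mem_univ _⟩
  have hNpos : 0 < N ℓ₀ := by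
    obtain ⟨q, hq⟩ := Function.ne_iff.1 hv0
    have hvbne : vb q.1 ≠ 0 := fun h => hq (by simpa using congrFun h q.2)
    have h3 : 0 < N q.1 := by
      rw [hNdef]
      simp only [norm_pos_iff]
      intro h
      exact hvbne (by simpa using congrArg (WithLp.equiv 2 (Fin (r q.1) → ℝ)) h)
    exact lt_of_lt_of_le h3 (hmax _ (Finset.mem_univ _))
  set S : ℝ := ∑ ℓ' ∈ Finset.univ.erase ℓ₀, opNorm ((V ℓ₀)ᵀ * V ℓ') with hS
  have hA : |1 - μ - (L:ℝ)⁻¹| * N ℓ₀ ≤ (L:ℝ)⁻¹ * (S * N ℓ₀) := by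
    rw [hN ℓ₀]
    refine mul_le_mul_of_nonneg_left ((hwle ℓ₀).trans ?_) (by positivity)
    rw [hS, Finset.sum_mul]
    exact Finset.sum_le_sum fun ℓ' _ =>
      mul_le_mul_of_nonneg_left (hmax _ (Finset.mem_univ _)) (opNorm_nonneg' _)
  have hB : |1 - μ - (L:ℝ)⁻¹| ≤ (L:ℝ)⁻¹ * S :=
    le_of_mul_le_mul_right (by linarith [hA]) hNpos
  -- heterogeneity bound
  have hcard : ((Finset.univ.erase ℓ₀).card : ℝ) = (L:ℝ) - 1 := by
    rw [Finset.card_erase_of_mem (Finset.mem_univ _), Finset.card_univ, Fintype.card_fin]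
    rw [Nat.cast_sub (by omega)]
    simp
  have hT : ∑ ℓ' ∈ Finset.univ.erase ℓ₀, (1 - opNorm ((V ℓ₀)ᵀ * V ℓ')) = ((L:ℝ) - 1) - S := by
    rw [Finset.sum_sub_distrib, Finset.sum_const, nsmul_eq_mul, hcard, mul_one, hS]
  have hL1 : (1:ℝ) ≤ (L:ℝ) - 1 := by
    have : (2:ℝ) ≤ (L:ℝ) := by exact_mod_cast hL
    linarith
  have hhet0 : ηV * ((L:ℝ) - 1) ≤ ((L:ℝ) - 1) - S := by
    have := hhet ℓ₀
    rw [hT] at this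
    rw [div_mul_eq_mul_div, one_mul] at this
    calc ηV * ((L:ℝ) - 1) ≤ ((((L:ℝ) - 1) - S) / ((L:ℝ) - 1)) * ((L:ℝ) - 1) :=
          mul_le_mul_of_nonneg_right this (by linarith)
      _ = ((L:ℝ) - 1) - S := by field_simp
  -- conclude
  have habs : 1 - μ - (L:ℝ)⁻¹ ≤ (L:ℝ)⁻¹ * S := (le_abs_self _).trans hB
  have hLinv : (L:ℝ)⁻¹ * (L:ℝ) = 1 := inv_mul_cancel₀ (by positivity)
  rw [div_le_iff₀ hLpos]
  have hmul := mul_le_mul_of_nonneg_right habs hLpos.le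
  have e1 : (1 - μ - (L:ℝ)⁻¹) * L = (L:ℝ) - μ * L - 1 := by
    have : ((L:ℝ)⁻¹) * L = 1 := hLinv
    ring_nf
    nlinarith [this]
  have e2 : ((L:ℝ)⁻¹ * S) * L = S := by
    rw [mul_comm ((L:ℝ)⁻¹) S, mul_assoc, hLinv, mul_one]
  rw [e1, e2] at hmul
  linarith
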